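/- Under the stated setup, let (λ^{(k)}) be a sequence generated by iterative maximization, λ^{(k+1)} = M(λ^{(k)}) = γ̂^{(k)} + λ^{(k)} where γ̂^{(k)} globally maximizes γ ↦ A(γ, λ^{(k)}), and assume the sequence of likelihood values (L(λ^{(k)})) is bounded above, that (λ^{(k)}) has a subsequence converging to some λ* with Z_{λ*} finite, that A and L are continuous, and that all directional derivatives of A(·, λ) at 0 and of L at λ exist and agree for each λ. Then (L(λ^{(k)})) is nondecreasing and converges to L* = L(λ*), where λ* is a critical point of L (all directional derivatives of L at λ* vanish). -/

import Mathlib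

/- Common setup: log-linear models over proof trees (complete data X) and
   queries (incomplete data Y). -/

variable {X Y : Type*}

/-- `ν_#(x) = ∑ i, ν_i(x)`. -/
def nuSharp {n : ℕ} (ν : Fin n → X → ℕ) (x : X) : ℕ := ∑ i, ν i x

/-- weighted property sum `λ·ν(x)`. -/
noncomputable def wdot {n : ℕ} (l : Fin n → ℝ) (ν : Fin n → X → ℕ) (x : X) : ℝ :=
  ∑ i, l i * (ν i x : ℝ)

/-- normalizing constant `Z_λ`. -/
noncomputable def Zpart (p0 : X → ℝ) {n : ℕ} (ν : Fin n → X → ℕ) (l : Fin n → ℝ) : ℝ :=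
  ∑' x : X, Real.exp (wdot l ν x) * p0 x

/-- log-linear distribution `p_λ(x)`. -/
noncomputable def pLL (p0 : X → ℝ) {n : ℕ} (ν : Fin n → X → ℕ) (l : Fin n → ℝ) (x : X) : ℝ :=
  (Zpart p0 ν l)⁻¹ * Real.exp (wdot l ν x) * p0 x

/-- incomplete-data probability `p_λ(y) = ∑_{x ∈ X(y)} p_λ(x)`. -/
noncomputable def pLLY (Yf : X → Y) (p0 : X → ℝ) {n : ℕ} (ν : Fin n → X → ℕ)
    (l : Fin n → ℝ) (y : Y) : ℝ :=
  ∑' x : {x : X // Yf x = y}, pLL p0 ν l x.1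

/-- incomplete-data log-likelihood `L(λ) = ∑_{y ∈ 𝒴} ln p_λ(y)`. -/
noncomputable def LL (Yf : X → Y) (p0 : X → ℝ) {n : ℕ} (ν : Fin n → X → ℕ)
    (𝒴 : Multiset Y) (l : Fin n → ℝ) : ℝ :=
  (𝒴.map fun y => Real.log (pLLY Yf p0 ν l y)).sum

/-- expectation `p_λ[f]`. -/
noncomputable def pExp (p0 : X → ℝ) {n : ℕ} (ν : Fin n → X → ℕ) (l : Fin n → ℝ)
    (f : X → ℝ) : ℝ :=
  ∑' x : X, pLL p0 ν l x * f x

/-- conditional expectation `k_λ[f]` given observed `y`. -/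
noncomputable def kExp (Yf : X → Y) (p0 : X → ℝ) {n : ℕ} (ν : Fin n → X → ℕ)
    (l : Fin n → ℝ) (y : Y) (f : X → ℝ) : ℝ :=
  ∑' x : {x : X // Yf x = y}, (pLL p0 ν l x.1 / pLLY Yf p0 ν l y) * f x.1

/-- auxiliary function
`A(γ,λ) = ∑_{y∈𝒴} (1 + k_λ[γ·ν] − p_λ[∑ i, ν̄_i e^{γ_i ν_#}])`. -/
noncomputable def Aaux (Yf : X → Y) (p0 : X → ℝ) {n : ℕ} (ν : Fin n → X → ℕ)
    (𝒴 : Multiset Y) (γ l : Fin n → ℝ) : ℝ :=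
  (𝒴.map fun y =>
    1 + kExp Yf p0 ν l y (fun x => wdot γ ν x)
      - pExp p0 ν l (fun x =>
          ∑ i, ((ν i x : ℝ) / (nuSharp ν x : ℝ)) * Real.exp (γ i * (nuSharp ν x : ℝ)))).sum

open Filter Topology

section AuxLemmas

variable {X Y : Type*} (Yf : X → Y) (p0 : X → ℝ) {n : ℕ} (ν : Fin n → X → ℕ)

lemma wdot_add' (γ l : Fin n → ℝ) (x : X) :
    wdot (γ + l) ν x = wdot γ ν x + wdot l ν x := by
  simp [wdot, add_mul, Finset.sum_add_distrib]

lemma nonempty_of_pLLY_pos {l : Fin n → ℝ} {y : Y}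
    (h : 0 < pLLY Yf p0 ν l y) : Nonempty {x : X // Yf x = y} := by
  by_contra hne
  rw [not_nonempty_iff] at hne
  rw [pLLY, tsum_empty] at h
  exact lt_irrefl _ h

lemma Zpart_pos (hp0 : ∀ x, 0 < p0 x) [Nonempty X] {l : Fin n → ℝ}
    (hZ : Summable fun x : X => Real.exp (wdot l ν x) * p0 x) :
    0 < Zpart p0 ν l := by
  obtain ⟨x0⟩ := ‹Nonempty X›
  exact Summable.tsum_pos hZ (fun x => (mul_pos (Real.exp_pos _) (hp0 x)).le) x0
    (mul_pos (Real.exp_pos _) (hp0 x0))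

lemma pLLY_eq (l : Fin n → ℝ) (y : Y) :
    pLLY Yf p0 ν l y =
      (Zpart p0 ν l)⁻¹ * ∑' x : {x : X // Yf x = y}, Real.exp (wdot l ν x.1) * p0 x.1 := by
  rw [pLLY, ← tsum_mul_left]
  exact tsum_congr fun x => by rw [pLL, mul_assoc]

lemma exp_wdot_jensen (hν : ∀ x, 1 ≤ nuSharp ν x) (γ : Fin n → ℝ) (x : X) :
    Real.exp (wdot γ ν x) ≤
      ∑ i, ((ν i x : ℝ) / (nuSharp ν x : ℝ)) * Real.exp (γ i * (nuSharp ν x : ℝ)) := by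
  have hs0 : (0:ℝ) < (nuSharp ν x : ℝ) := by exact_mod_cast hν x
  have hw1 : ∑ i, (ν i x : ℝ) / (nuSharp ν x : ℝ) = 1 := by
    rw [← Finset.sum_div, div_eq_one_iff_eq hs0.ne']
    simp [nuSharp]
  have hj := convexOn_exp.map_sum_le (t := Finset.univ)
    (w := fun i => (ν i x : ℝ) / (nuSharp ν x : ℝ))
    (p := fun i => γ i * (nuSharp ν x : ℝ))
    (fun i _ => by positivity) hw1 (fun i _ => Set.mem_univ _)
  have hsum : ∑ i, ((ν i x : ℝ) / (nuSharp ν x : ℝ)) • (γ i * (nuSharp ν x : ℝ))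
      = wdot γ ν x := by
    rw [wdot]
    refine Finset.sum_congr rfl fun i _ => ?_
    rw [smul_eq_mul]
    field_simp
  rw [hsum] at hj
  simpa [smul_eq_mul] using hj

lemma per_y_key (hp0 : ∀ x, 0 < p0 x) (hν : ∀ x, 1 ≤ nuSharp ν x)
    {l γ : Fin n → ℝ}
    (hZl : Summable fun x : X => Real.exp (wdot l ν x) * p0 x)
    (hZlg : Summable fun x : X => Real.exp (wdot (γ + l) ν x) * p0 x)
    {y : Y} (hy : 0 < pLLY Yf p0 ν l y)
    (hk : Summable fun x : {x : X // Yf x = y} =>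
      (pLL p0 ν l x.1 / pLLY Yf p0 ν l y) * wdot γ ν x.1)
    (hps : Summable fun x : X => pLL p0 ν l x *
      ∑ i, ((ν i x : ℝ) / (nuSharp ν x : ℝ)) * Real.exp (γ i * (nuSharp ν x : ℝ))) :
    1 + kExp Yf p0 ν l y (fun x => wdot γ ν x)
      - pExp p0 ν l (fun x => ∑ i, ((ν i x : ℝ) / (nuSharp ν x : ℝ)) *
          Real.exp (γ i * (nuSharp ν x : ℝ)))
      + Real.log (pLLY Yf p0 ν l y) ≤ Real.log (pLLY Yf p0 ν (γ + l) y) := by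
  haveI hne : Nonempty {x : X // Yf x = y} := nonempty_of_pLLY_pos Yf p0 ν hy
  haveI hXne : Nonempty X := ⟨hne.some.1⟩
  set h : X → ℝ := fun x => Real.exp (wdot l ν x) * p0 x with hh
  have hposh : ∀ x, 0 < h x := fun x => mul_pos (Real.exp_pos _) (hp0 x)
  have hZlpos : 0 < Zpart p0 ν l := Zpart_pos p0 ν hp0 hZl
  have hZgpos : 0 < Zpart p0 ν (γ + l) := Zpart_pos p0 ν hp0 hZlg
  set w : X → ℝ := fun x => wdot γ ν x with hw
  have hTsum : Summable fun x : {x : X // Yf x = y} => h x.1 := hZl.subtype _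
  set T := ∑' x : {x : X // Yf x = y}, h x.1 with hT
  have hTpos : 0 < T := Summable.tsum_pos hTsum (fun x => (hposh _).le) hne.some (hposh _)
  have hYeq : pLLY Yf p0 ν l y = (Zpart p0 ν l)⁻¹ * T := pLLY_eq Yf p0 ν l y
  have hratio : ∀ x : {x : X // Yf x = y},
      (pLL p0 ν l x.1 / pLLY Yf p0 ν l y) * w x.1 = T⁻¹ * (h x.1 * w x.1) := by
    intro x
    rw [hYeq, pLL, mul_assoc,
      mul_div_mul_left _ _ (inv_ne_zero hZlpos.ne')]
    show (h x.1 / T) * w x.1 = T⁻¹ * (h x.1 * w x.1)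
    ring
  have hUsum : Summable fun x : {x : X // Yf x = y} => h x.1 * w x.1 := by
    have h1 : Summable fun x : {x : X // Yf x = y} => T⁻¹ * (h x.1 * w x.1) := by
      refine hk.congr fun x => (hratio x)
    have h2 := h1.mul_left T
    refine h2.congr fun x => ?_
    field_simp
  set U := ∑' x : {x : X // Yf x = y}, h x.1 * w x.1 with hU
  set a := T⁻¹ * U with ha
  have hkeq : kExp Yf p0 ν l y (fun x => wdot γ ν x) = a := by
    rw [kExp, tsum_congr hratio, tsum_mul_left, ha, hU]
  -- Step A
  have hSsum : Summable fun x : {x : X // Yf x = y} => Real.exp (w x.1) * h x.1 := by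
    refine (hZlg.subtype _).congr fun x => ?_
    show Real.exp (wdot (γ + l) ν x.1) * p0 x.1 = Real.exp (w x.1) * h x.1
    rw [wdot_add', Real.exp_add, hh]
    ring
  set S := ∑' x : {x : X // Yf x = y}, Real.exp (w x.1) * h x.1 with hS
  have hSge : Real.exp a * T ≤ S := by
    have hpt : ∀ x : {x : X // Yf x = y},
        Real.exp a * ((1 - a) * h x.1 + h x.1 * w x.1) ≤ Real.exp (w x.1) * h x.1 := by
      intro x
      have h1 : w x.1 - a + 1 ≤ Real.exp (w x.1 - a) := Real.add_one_le_exp _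
      have h2 : Real.exp a * (w x.1 - a + 1) ≤ Real.exp (w x.1) := by
        calc Real.exp a * (w x.1 - a + 1) ≤ Real.exp a * Real.exp (w x.1 - a) :=
              mul_le_mul_of_nonneg_left h1 (Real.exp_pos _).le
          _ = Real.exp (w x.1) := by rw [← Real.exp_add]; congr 1; ring
      have h3 := mul_le_mul_of_nonneg_right h2 (hposh x.1).le
      calc Real.exp a * ((1 - a) * h x.1 + h x.1 * w x.1)
          = Real.exp a * (w x.1 - a + 1) * h x.1 := by ring
        _ ≤ Real.exp (w x.1) * h x.1 := h3
    have hlsum : Summable fun x : {x : X // Yf x = y} =>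
        Real.exp a * ((1 - a) * h x.1 + h x.1 * w x.1) :=
      ((hTsum.mul_left (1 - a)).add hUsum).mul_left (Real.exp a)
    have hle := Summable.tsum_le_tsum hpt hlsum hSsum
    have hcomb : (∑' x : {x : X // Yf x = y},
        Real.exp a * ((1 - a) * h x.1 + h x.1 * w x.1)) = Real.exp a * T := by
      rw [tsum_mul_left, Summable.tsum_add (hTsum.mul_left (1 - a)) hUsum, tsum_mul_left,
        ← hT, ← hU]
      have hTU : (1 - a) * T + U = T := by
        rw [ha]
        field_simp
        ring
      rw [hTU]
    rw [← hcomb]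
    exact hle
  have hSpos : 0 < S := lt_of_lt_of_le (mul_pos (Real.exp_pos a) hTpos) hSge
  have hYgeq : pLLY Yf p0 ν (γ + l) y = (Zpart p0 ν (γ + l))⁻¹ * S := by
    rw [pLLY_eq]
    congr 1
    refine tsum_congr fun x => ?_
    show Real.exp (wdot (γ + l) ν x.1) * p0 x.1 = Real.exp (w x.1) * h x.1
    rw [wdot_add', Real.exp_add, hh]
    ring
  have hlogS : a + Real.log T ≤ Real.log S := by
    have hll := Real.log_le_log (mul_pos (Real.exp_pos a) hTpos) hSge
    rwa [Real.log_mul (Real.exp_ne_zero a) hTpos.ne', Real.log_exp] at hll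
  -- Step B
  have hBsum1 : Summable fun x : X => pLL p0 ν l x * Real.exp (w x) := by
    refine (hZlg.mul_left (Zpart p0 ν l)⁻¹).congr fun x => ?_
    rw [pLL, wdot_add', Real.exp_add]
    ring
  have hZratio : (∑' x : X, pLL p0 ν l x * Real.exp (w x))
      = (Zpart p0 ν l)⁻¹ * Zpart p0 ν (γ + l) := by
    have hzg : Zpart p0 ν (γ + l) = ∑' x : X, Real.exp (wdot (γ + l) ν x) * p0 x := rfl
    rw [hzg, ← tsum_mul_left]
    refine tsum_congr fun x => ?_
    rw [pLL, wdot_add', Real.exp_add]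
    ring
  have hstepB : Real.log (Zpart p0 ν (γ + l)) - Real.log (Zpart p0 ν l)
      ≤ pExp p0 ν l (fun x => ∑ i, ((ν i x : ℝ) / (nuSharp ν x : ℝ)) *
          Real.exp (γ i * (nuSharp ν x : ℝ))) - 1 := by
    have h1 : Real.log (Zpart p0 ν (γ + l) / Zpart p0 ν l)
        ≤ Zpart p0 ν (γ + l) / Zpart p0 ν l - 1 :=
      Real.log_le_sub_one_of_pos (div_pos hZgpos hZlpos)
    rw [Real.log_div hZgpos.ne' hZlpos.ne'] at h1
    have h2 : Zpart p0 ν (γ + l) / Zpart p0 ν l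
        = ∑' x : X, pLL p0 ν l x * Real.exp (w x) := by
      rw [hZratio, div_eq_inv_mul]
    have hpLLnn : ∀ x : X, 0 ≤ pLL p0 ν l x := fun x =>
      mul_nonneg (mul_nonneg (inv_nonneg.mpr hZlpos.le) (Real.exp_pos _).le) (hp0 x).le
    have h3 : (∑' x : X, pLL p0 ν l x * Real.exp (w x))
        ≤ pExp p0 ν l (fun x => ∑ i, ((ν i x : ℝ) / (nuSharp ν x : ℝ)) *
            Real.exp (γ i * (nuSharp ν x : ℝ))) := by
      rw [pExp]
      refine Summable.tsum_le_tsum (fun x => ?_) hBsum1 hps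
      exact mul_le_mul_of_nonneg_left (exp_wdot_jensen ν hν γ x) (hpLLnn x)
    linarith
  -- combine
  rw [hkeq, hYeq, hYgeq,
    Real.log_mul (inv_ne_zero hZlpos.ne') hTpos.ne',
    Real.log_mul (inv_ne_zero hZgpos.ne') hSpos.ne',
    Real.log_inv, Real.log_inv]
  linarith

lemma key_ineq (hp0 : ∀ x, 0 < p0 x) (hν : ∀ x, 1 ≤ nuSharp ν x)
    (𝒴 : Multiset Y) {l γ : Fin n → ℝ}
    (hZl : Summable fun x : X => Real.exp (wdot l ν x) * p0 x)
    (hZlg : Summable fun x : X => Real.exp (wdot (γ + l) ν x) * p0 x)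
    (hposy : ∀ y ∈ 𝒴, 0 < pLLY Yf p0 ν l y)
    (hky : ∀ y ∈ 𝒴, Summable fun x : {x : X // Yf x = y} =>
      (pLL p0 ν l x.1 / pLLY Yf p0 ν l y) * wdot γ ν x.1)
    (hps : Summable fun x : X => pLL p0 ν l x *
      ∑ i, ((ν i x : ℝ) / (nuSharp ν x : ℝ)) * Real.exp (γ i * (nuSharp ν x : ℝ))) :
    Aaux Yf p0 ν 𝒴 γ l + LL Yf p0 ν 𝒴 l ≤ LL Yf p0 ν 𝒴 (γ + l) := by
  rw [Aaux, LL, LL, ← Multiset.sum_map_add]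
  exact Multiset.sum_map_le_sum_map _ _ fun y hy =>
    per_y_key Yf p0 ν hp0 hν hZl hZlg (hposy y hy) (hky y hy) hps

lemma Aaux_zero (hp0 : ∀ x, 0 < p0 x) (hν : ∀ x, 1 ≤ nuSharp ν x)
    (𝒴 : Multiset Y) {l : Fin n → ℝ}
    (hZl : Summable fun x : X => Real.exp (wdot l ν x) * p0 x)
    (hposy : ∀ y ∈ 𝒴, 0 < pLLY Yf p0 ν l y) :
    Aaux Yf p0 ν 𝒴 (0 : Fin n → ℝ) l = 0 := by
  rw [Aaux]
  apply Multiset.sum_eq_zero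
  intro z hz
  rw [Multiset.mem_map] at hz
  obtain ⟨y, hy, rfl⟩ := hz
  haveI hne : Nonempty {x : X // Yf x = y} := nonempty_of_pLLY_pos Yf p0 ν (hposy y hy)
  haveI hXne : Nonempty X := ⟨hne.some.1⟩
  have hZlpos : 0 < Zpart p0 ν l := Zpart_pos p0 ν hp0 hZl
  have hkz : kExp Yf p0 ν l y (fun x => wdot (0 : Fin n → ℝ) ν x) = 0 := by
    rw [kExp]
    have hz0 : ∀ x : {x : X // Yf x = y},
        (pLL p0 ν l x.1 / pLLY Yf p0 ν l y) * wdot (0 : Fin n → ℝ) ν x.1 = 0 := fun x => by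
      simp [wdot]
    rw [tsum_congr hz0, tsum_zero]
  have hpz : pExp p0 ν l (fun x => ∑ i, ((ν i x : ℝ) / (nuSharp ν x : ℝ)) *
      Real.exp ((0 : Fin n → ℝ) i * (nuSharp ν x : ℝ))) = 1 := by
    have hf : ∀ x : X, (∑ i, ((ν i x : ℝ) / (nuSharp ν x : ℝ)) *
        Real.exp ((0 : Fin n → ℝ) i * (nuSharp ν x : ℝ))) = 1 := by
      intro x
      have hs0 : (0:ℝ) < (nuSharp ν x : ℝ) := by exact_mod_cast hν x
      simp only [Pi.zero_apply, zero_mul, Real.exp_zero, mul_one]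
      rw [← Finset.sum_div, div_eq_one_iff_eq hs0.ne']
      simp [nuSharp]
    rw [pExp, tsum_congr (fun x => by rw [hf x, mul_one]),
      tsum_congr (fun x : X => by rw [pLL, mul_assoc]), tsum_mul_left, ← Zpart,
      inv_mul_cancel₀ hZlpos.ne']
  rw [hkz, hpz]
  ring

end AuxLemmas

set_option maxHeartbeats 4000000 in
/-- Corollary 7: a bounded-above sequence of IM likelihood values is
nondecreasing and converges to `L(λ*)` for a critical point `λ*` of `L`. -/
theorem im_likelihood_converges_to_critical_value
    {X Y : Type*} [Countable X] (Yf : X → Y)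
    (p0 : X → ℝ) (hp0 : ∀ x, 0 < p0 x) (hp0sum : ∑' x : X, p0 x = 1)
    {n : ℕ} (ν : Fin n → X → ℕ) (hν : ∀ x, 1 ≤ nuSharp ν x)
    (𝒴 : Multiset Y)
    (hpos : ∀ l : Fin n → ℝ, (Summable fun x : X => Real.exp (wdot l ν x) * p0 x) →
      ∀ y ∈ 𝒴, 0 < pLLY Yf p0 ν l y)
    (hksum : ∀ l γ : Fin n → ℝ, ∀ y ∈ 𝒴, Summable fun x : {x : X // Yf x = y} =>
      (pLL p0 ν l x.1 / pLLY Yf p0 ν l y) * wdot γ ν x.1)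
    (hpsum : ∀ l γ : Fin n → ℝ, Summable fun x : X => pLL p0 ν l x *
      ∑ i, ((ν i x : ℝ) / (nuSharp ν x : ℝ)) * Real.exp (γ i * (nuSharp ν x : ℝ)))
    (seq γh : ℕ → Fin n → ℝ)
    (hseqZ : ∀ k : ℕ, Summable fun x : X => Real.exp (wdot (seq k) ν x) * p0 x)
    (hstep : ∀ k : ℕ, seq (k + 1) = γh k + seq k)
    (hmax : ∀ k : ℕ, ∀ γ : Fin n → ℝ,
      Aaux Yf p0 ν 𝒴 γ (seq k) ≤ Aaux Yf p0 ν 𝒴 (γh k) (seq k))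
    (hbdd : ∃ B : ℝ, ∀ k : ℕ, LL Yf p0 ν 𝒴 (seq k) ≤ B)
    (lstar : Fin n → ℝ)
    (hZstar : Summable fun x : X => Real.exp (wdot lstar ν x) * p0 x)
    (φ : ℕ → ℕ) (hφ : StrictMono φ)
    (hlim : Filter.Tendsto (fun k : ℕ => seq (φ k)) Filter.atTop (nhds lstar))
    (hAcont : ContinuousOn
      (fun p : (Fin n → ℝ) × (Fin n → ℝ) => Aaux Yf p0 ν 𝒴 p.1 p.2)
      (Set.univ ×ˢ {l : Fin n → ℝ | Summable fun x : X => Real.exp (wdot l ν x) * p0 x}))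
    (hLcont : ContinuousOn (LL Yf p0 ν 𝒴)
      {l : Fin n → ℝ | Summable fun x : X => Real.exp (wdot l ν x) * p0 x})
    (hderiv : ∀ l : Fin n → ℝ, (Summable fun x : X => Real.exp (wdot l ν x) * p0 x) →
      ∀ γ : Fin n → ℝ, ∃ D : ℝ,
        HasDerivAt (fun t : ℝ => Aaux Yf p0 ν 𝒴 (t • γ) l) D 0 ∧
        HasDerivAt (fun t : ℝ => LL Yf p0 ν 𝒴 (l + t • γ)) D 0) :
    Monotone (fun k : ℕ => LL Yf p0 ν 𝒴 (seq k)) ∧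
    Filter.Tendsto (fun k : ℕ => LL Yf p0 ν 𝒴 (seq k)) Filter.atTop
      (nhds (LL Yf p0 ν 𝒴 lstar)) ∧
    (∀ γ : Fin n → ℝ, HasDerivAt (fun t : ℝ => LL Yf p0 ν 𝒴 (lstar + t • γ)) 0 0) := by
  classical
  have hkey : ∀ k : ℕ, Aaux Yf p0 ν 𝒴 (γh k) (seq k) + LL Yf p0 ν 𝒴 (seq k)
      ≤ LL Yf p0 ν 𝒴 (seq (k + 1)) := by
    intro k
    have hZlg : Summable fun x : X => Real.exp (wdot (γh k + seq k) ν x) * p0 x := by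
      rw [← hstep k]; exact hseqZ (k + 1)
    have hki := key_ineq Yf p0 ν hp0 hν 𝒴 (hseqZ k) hZlg
      (hpos _ (hseqZ k)) (hksum (seq k) (γh k)) (hpsum (seq k) (γh k))
    rwa [← hstep k] at hki
  have hA0 : ∀ k : ℕ, Aaux Yf p0 ν 𝒴 (0 : Fin n → ℝ) (seq k) = 0 := fun k =>
    Aaux_zero Yf p0 ν hp0 hν 𝒴 (hseqZ k) (hpos _ (hseqZ k))
  have hmono' : ∀ k : ℕ, LL Yf p0 ν 𝒴 (seq k) ≤ LL Yf p0 ν 𝒴 (seq (k + 1)) := by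
    intro k
    have h1 := hmax k 0
    have h2 := hkey k
    have h3 := hA0 k
    linarith
  have hmono : Monotone (fun k : ℕ => LL Yf p0 ν 𝒴 (seq k)) :=
    monotone_nat_of_le_succ hmono'
  obtain ⟨B, hB⟩ := hbdd
  have hbdda : BddAbove (Set.range fun k : ℕ => LL Yf p0 ν 𝒴 (seq k)) :=
    ⟨B, by rintro _ ⟨k, rfl⟩; exact hB k⟩
  have htend : Filter.Tendsto (fun k : ℕ => LL Yf p0 ν 𝒴 (seq k)) Filter.atTop
      (nhds (⨆ k : ℕ, LL Yf p0 ν 𝒴 (seq k))) := tendsto_atTop_ciSup hmono hbdda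
  have hsub1 : Filter.Tendsto (fun j : ℕ => LL Yf p0 ν 𝒴 (seq (φ j))) Filter.atTop
      (nhds (⨆ k : ℕ, LL Yf p0 ν 𝒴 (seq k))) := htend.comp hφ.tendsto_atTop
  have hsub2 : Filter.Tendsto (fun j : ℕ => seq (φ j)) Filter.atTop
      (nhdsWithin lstar {l : Fin n → ℝ | Summable fun x : X =>
        Real.exp (wdot l ν x) * p0 x}) :=
    tendsto_nhdsWithin_of_tendsto_nhds_of_eventually_within _ hlim
      (Filter.Eventually.of_forall fun j => hseqZ (φ j))
  have hsub3 : Filter.Tendsto (fun j : ℕ => LL Yf p0 ν 𝒴 (seq (φ j))) Filter.atTop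
      (nhds (LL Yf p0 ν 𝒴 lstar)) := (hLcont lstar hZstar).tendsto.comp hsub2
  have hLeq : (⨆ k : ℕ, LL Yf p0 ν 𝒴 (seq k)) = LL Yf p0 ν 𝒴 lstar :=
    tendsto_nhds_unique hsub1 hsub3
  refine ⟨hmono, hLeq ▸ htend, ?_⟩
  have hAneg : ∀ γ' : Fin n → ℝ, Aaux Yf p0 ν 𝒴 γ' lstar ≤ 0 := by
    intro γ'
    have hje : ∀ j : ℕ, Aaux Yf p0 ν 𝒴 γ' (seq (φ j))
        ≤ LL Yf p0 ν 𝒴 (seq (φ j + 1)) - LL Yf p0 ν 𝒴 (seq (φ j)) := by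
      intro j
      have h1 := hmax (φ j) γ'
      have h2 := hkey (φ j)
      linarith
    have hT1 : Filter.Tendsto (fun j : ℕ => Aaux Yf p0 ν 𝒴 γ' (seq (φ j)))
        Filter.atTop (nhds (Aaux Yf p0 ν 𝒴 γ' lstar)) := by
      have hmem' : ((γ', lstar) : (Fin n → ℝ) × (Fin n → ℝ)) ∈
          (Set.univ ×ˢ {l : Fin n → ℝ | Summable fun x : X =>
            Real.exp (wdot l ν x) * p0 x}) := ⟨trivial, hZstar⟩
      have hc := (hAcont (γ', lstar) hmem').tendsto
      have hp : Filter.Tendsto (fun j : ℕ => ((γ' : Fin n → ℝ), seq (φ j)))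
          Filter.atTop (nhdsWithin (γ', lstar)
            (Set.univ ×ˢ {l : Fin n → ℝ | Summable fun x : X =>
              Real.exp (wdot l ν x) * p0 x})) := by
        apply tendsto_nhdsWithin_of_tendsto_nhds_of_eventually_within
        · exact Filter.Tendsto.prodMk_nhds tendsto_const_nhds hlim
        · exact Filter.Eventually.of_forall fun j => ⟨trivial, hseqZ (φ j)⟩
      have hcc := hc.comp hp
      simpa [Function.comp_def] using hcc
    have hT2 : Filter.Tendsto (fun j : ℕ =>
        LL Yf p0 ν 𝒴 (seq (φ j + 1)) - LL Yf p0 ν 𝒴 (seq (φ j)))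
        Filter.atTop (nhds 0) := by
      have ha : Filter.Tendsto (fun j : ℕ => φ j + 1) Filter.atTop Filter.atTop :=
        Filter.tendsto_atTop_mono (fun j => Nat.le_succ (φ j)) hφ.tendsto_atTop
      have h1 : Filter.Tendsto (fun j : ℕ => LL Yf p0 ν 𝒴 (seq (φ j + 1)))
          Filter.atTop (nhds (⨆ k : ℕ, LL Yf p0 ν 𝒴 (seq k))) := htend.comp ha
      have h2 := h1.sub hsub1
      simpa using h2
    exact le_of_tendsto_of_tendsto' hT1 hT2 hje
  intro γ
  obtain ⟨D, hDA, hDL⟩ := hderiv lstar hZstar γ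
  have hmaxloc : IsLocalMax (fun t : ℝ => Aaux Yf p0 ν 𝒴 (t • γ) lstar) 0 := by
    apply Filter.Eventually.of_forall
    intro t
    show Aaux Yf p0 ν 𝒴 (t • γ) lstar ≤ Aaux Yf p0 ν 𝒴 ((0 : ℝ) • γ) lstar
    rw [zero_smul, Aaux_zero Yf p0 ν hp0 hν 𝒴 hZstar (hpos lstar hZstar)]
    exact hAneg (t • γ)
  have hD0 : D = 0 := hmaxloc.hasDerivAt_eq_zero hDA
  exact hD0 ▸ hDL
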